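/- Let p be a prime, G a finite p-group, k = ZMod p, kG the group algebra with Jacobson radical J. Let A be a finite type with a linear order, and let RLL be the reverse length-lexicographical order on the free monoid M on A (the order opposite to: shorter words first, words of equal length compared lexicographically). Let φ : FreeAlgebra k A →ₐ[k] kG be a surjective k-algebra homomorphism with φ(x_a) ∈ J for every generator. Then for every r ≥ 0: (1) the family (φ(w)) over RLL-nontips w of length ≥ r is a k-basis of J^r; (2) the images in J^r/J^{r+1} of φ(w), as w runs over the RLL-nontips of length exactly r, form a k-basis of J^r/J^{r+1}. -/

import Mathlib

/-- The monomial in the free algebra corresponding to a word in the free monoid. -/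
noncomputable def wordMonomial (k : Type*) [CommRing k] {A : Type*} (w : FreeMonoid A) :
    FreeAlgebra k A :=
  FreeMonoid.lift (FreeAlgebra.ι k) w

/-- The strict length-lexicographical order on words: shorter words first,
words of equal length compared lexicographically. -/
def LLlt {A : Type*} [LinearOrder A] (w₁ w₂ : FreeMonoid A) : Prop :=
  w₁.toList.length < w₂.toList.length ∨
    (w₁.toList.length = w₂.toList.length ∧ List.Lex (· < ·) w₁.toList w₂.toList)

/-- The strict reverse length-lexicographical order: the opposite of `LLlt`. -/
def RLLlt {A : Type*} [LinearOrder A] (w₁ w₂ : FreeMonoid A) : Prop :=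
  LLlt w₂ w₁

/-! ### Auxiliary lemmas: nilpotency of the Jacobson radical of a finite ring -/

section Nilp
variable {R : Type*} [Ring R]

private lemma jac_mul_right' {x : R} (hx : x ∈ (⊥ : Ideal R).jacobson) (r : R) :
    x * r ∈ (⊥ : Ideal R).jacobson :=
  (⊥ : Ideal R).jacobson.mul_mem_right r hx

private lemma jac_mul_top' : (⊥ : Ideal R).jacobson * ⊤ = (⊥ : Ideal R).jacobson := by
  apply le_antisymm
  · exact Ideal.mul_le.mpr fun r hr s _ => jac_mul_right' hr s
  · intro x hx
    simpa using Ideal.mul_mem_mul hx (Submodule.mem_top (x := (1 : R)))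

private lemma jac_pow_comm' (n : ℕ) :
    (⊥ : Ideal R).jacobson * (⊥ : Ideal R).jacobson ^ n
      = (⊥ : Ideal R).jacobson ^ n * (⊥ : Ideal R).jacobson := by
  induction n with
  | zero => rw [Submodule.pow_zero, Ideal.one_eq_top, jac_mul_top', Ideal.top_mul]
  | succ n ih =>
      rw [Submodule.pow_succ, ← Ideal.mul_assoc, ih, Ideal.mul_assoc]

private lemma jac_pow_succ' (n : ℕ) :
    (⊥ : Ideal R).jacobson ^ (n + 1)
      = (⊥ : Ideal R).jacobson * (⊥ : Ideal R).jacobson ^ n := by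
  rw [Submodule.pow_succ, jac_pow_comm']

/-- left-Nakayama for the Jacobson radical, by hand, list version. -/
private lemma nakayama_list (l : List R)
    (h : Ideal.span {x | x ∈ l} ≤ (⊥ : Ideal R).jacobson * Ideal.span {x | x ∈ l}) :
    Ideal.span {x | x ∈ l} = ⊥ := by
  induction l with
  | nil => simp [Ideal.span_le]
  | cons x t ih =>
      have hset : {y | y ∈ x :: t} = {x} ∪ {y | y ∈ t} := by
        ext y; simp [List.mem_cons]
      have hsplit : Ideal.span {y | y ∈ x :: t}
          = Ideal.span {x} ⊔ Ideal.span {y | y ∈ t} := by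
        rw [hset, Ideal.span_union]
      have hform : ∀ y ∈ (⊥ : Ideal R).jacobson * Ideal.span ({x} : Set R),
          ∃ a ∈ (⊥ : Ideal R).jacobson, y = a * x := by
        intro y hy
        refine Submodule.smul_induction_on hy ?_ ?_
        · intro r hr n hn
          obtain ⟨c, rfl⟩ := Submodule.mem_span_singleton.mp hn
          exact ⟨r * c, jac_mul_right' hr c, by
            simp [smul_eq_mul, mul_assoc]⟩
        · rintro y z ⟨a, ha, rfl⟩ ⟨b, hb, rfl⟩
          exact ⟨a + b, add_mem ha hb, (add_mul a b x).symm⟩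
      have hx : x ∈ (⊥ : Ideal R).jacobson * Ideal.span ({x} : Set R)
          ⊔ Ideal.span {y | y ∈ t} := by
        have hx0 : x ∈ Ideal.span {y | y ∈ x :: t} :=
          Ideal.subset_span (by simp)
        have := h hx0
        rw [hsplit, Ideal.mul_sup] at this
        exact (sup_le_sup_left (Ideal.mul_le_right (I := (⊥ : Ideal R).jacobson) (J := Ideal.span {y | y ∈ t})) ((⊥ : Ideal R).jacobson * Ideal.span ({x} : Set R))) this
      obtain ⟨y, hy, z, hz, hyz⟩ := Submodule.mem_sup.mp hx
      obtain ⟨a, ha, rfl⟩ := hform y hy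
      have hax : (1 - a) * x = z := by
        rw [sub_mul, one_mul, sub_eq_iff_eq_add']; exact hyz.symm
      obtain ⟨s, hs⟩ := Ideal.exists_mul_sub_mem_of_sub_one_mem_jacobson (1 - a)
        (by simpa using (⊥ : Ideal R).jacobson.neg_mem ha)
      rw [Ideal.mem_bot, sub_eq_zero] at hs
      have hxmem : x ∈ Ideal.span {y | y ∈ t} := by
        have : x = s * z := by
          rw [← hax, ← mul_assoc, hs, one_mul]
        rw [this]
        exact Ideal.mul_mem_left _ s hz
      have hspan_eq : Ideal.span {y | y ∈ x :: t} = Ideal.span {y | y ∈ t} := by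
        apply le_antisymm
        · rw [Ideal.span_le]
          intro y hy
          rcases List.mem_cons.mp hy with rfl | hyt
          · exact hxmem
          · exact Ideal.subset_span hyt
        · exact Ideal.span_mono (by intro y hy; simp [List.mem_cons]; exact Or.inr hy)
      rw [hspan_eq]
      apply ih
      calc Ideal.span {y | y ∈ t} = Ideal.span {y | y ∈ x :: t} := hspan_eq.symm
        _ ≤ (⊥ : Ideal R).jacobson * Ideal.span {y | y ∈ x :: t} := h
        _ = (⊥ : Ideal R).jacobson * Ideal.span {y | y ∈ t} := by rw [hspan_eq]

private lemma jac_nilpotent_of_finite [Finite R] :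
    ∃ N : ℕ, ((⊥ : Ideal R).jacobson) ^ N = ⊥ := by
  haveI hfin : Finite (Ideal R) :=
    Finite.of_injective (fun I : Ideal R => (I : Set R)) SetLike.coe_injective
  obtain ⟨m, n, hmn, hpow⟩ := Finite.exists_ne_map_eq_of_infinite
    (fun n : ℕ => ((⊥ : Ideal R).jacobson) ^ n : ℕ → Ideal R)
  wlog hlt : m < n generalizing m n
  · exact this n m hmn.symm hpow.symm (by omega)
  set Jb := (⊥ : Ideal R).jacobson
  have hstab : Jb ^ m ≤ Jb * Jb ^ m := by
    calc Jb ^ m = Jb ^ n := hpow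
      _ ≤ Jb ^ (m + 1) := Ideal.pow_le_pow_right hlt
      _ = Jb * Jb ^ m := jac_pow_succ' m
  have hKfin : ((Jb ^ m : Ideal R) : Set R).Finite := Set.toFinite _
  set l := hKfin.toFinset.toList with hl
  have hlset : {x | x ∈ l} = ((Jb ^ m : Ideal R) : Set R) := by
    ext x
    simp [hl, Set.Finite.mem_toFinset]
  have hKspan : Ideal.span {x | x ∈ l} = Jb ^ m := by
    rw [hlset, Ideal.span_eq]
  refine ⟨m, ?_⟩
  rw [← hKspan]
  apply nakayama_list
  rw [hKspan]
  exact hstab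

end Nilp

/-! ### Auxiliary lemmas: the length-lexicographic order -/

section Ord
variable {A : Type*} [LinearOrder A]

private def llKey (w : FreeMonoid A) : ℕ ×ₗ List A :=
  toLex (w.toList.length, w.toList)

private lemma llKey_injective : Function.Injective (llKey (A := A)) := by
  intro u v huv
  have := congrArg (fun x => (ofLex x).2) huv
  exact FreeMonoid.toList.injective this

private lemma LLlt_iff_key (u v : FreeMonoid A) : LLlt u v ↔ llKey u < llKey v := by
  rw [llKey, llKey, Prod.Lex.lt_iff]
  unfold LLlt
  constructor
  · rintro (h | ⟨h1, h2⟩)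
    · exact Or.inl h
    · exact Or.inr ⟨h1, h2⟩
  · rintro (h | ⟨h1, h2⟩)
    · exact Or.inl h
    · exact Or.inr ⟨h1, h2⟩

private lemma RLLlt_trans {u v w : FreeMonoid A} (h1 : RLLlt u v) (h2 : RLLlt v w) :
    RLLlt u w := by
  unfold RLLlt at *
  rw [LLlt_iff_key] at *
  exact h2.trans h1

private lemma RLLlt_irrefl (u : FreeMonoid A) : ¬ RLLlt u u := by
  unfold RLLlt
  rw [LLlt_iff_key]
  exact lt_irrefl _

private lemma RLLlt_length {u v : FreeMonoid A} (h : RLLlt u v) :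
    v.toList.length ≤ u.toList.length := by
  rcases h with h | ⟨h, _⟩
  · exact h.le
  · exact h.le

end Ord

set_option maxHeartbeats 2000000 in
/-- with respect to the reverse length-lexicographic order, (1) the images of
the nontips of length at least `r` form a basis of `J^r`, and (2) the images of the
nontips of length exactly `r` give a basis of `J^r/J^{r+1}` (realised inside `kG/J^{r+1}`). -/
theorem rll_nontips_basis_of_radical_powers
    (p : ℕ) (hp : p.Prime) (G : Type*) [Group G] [Fintype G] (hG : IsPGroup p G)
    (A : Type*) [Finite A] [LinearOrder A]
    (J : Ideal (MonoidAlgebra (ZMod p) G))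
    (hJ : J = (⊥ : Ideal (MonoidAlgebra (ZMod p) G)).jacobson)
    (φ : FreeAlgebra (ZMod p) A →ₐ[ZMod p] MonoidAlgebra (ZMod p) G)
    (hsurj : Function.Surjective φ)
    (hrad : ∀ a : A, φ (FreeAlgebra.ι (ZMod p) a) ∈ J)
    (IsTip : FreeMonoid A → Prop)
    (hTip : ∀ w, IsTip w ↔ φ (wordMonomial (ZMod p) w) ∈
      Submodule.span (ZMod p) ((fun v => φ (wordMonomial (ZMod p) v)) '' {v | RLLlt v w})) :
    ∀ r : ℕ,
      -- (1) images of nontips of length ≥ r form a basis of J^r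
      (LinearIndependent (ZMod p)
        (fun w : {w : FreeMonoid A // ¬ IsTip w ∧ r ≤ w.toList.length} =>
          φ (wordMonomial (ZMod p) w.1)) ∧
       Submodule.span (ZMod p)
        (Set.range (fun w : {w : FreeMonoid A // ¬ IsTip w ∧ r ≤ w.toList.length} =>
          φ (wordMonomial (ZMod p) w.1))) = Submodule.restrictScalars (ZMod p) (J ^ r)) ∧
      -- (2) images in kG/J^{r+1} of the nontips of length exactly r form a basis of the
      -- image of J^r, i.e. of J^r/J^{r+1}
      (LinearIndependent (ZMod p)
        (fun w : {w : FreeMonoid A // ¬ IsTip w ∧ w.toList.length = r} =>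
          Submodule.Quotient.mk (p := Submodule.restrictScalars (ZMod p) (J ^ (r + 1)))
            (φ (wordMonomial (ZMod p) w.1))) ∧
       Submodule.span (ZMod p)
        (Set.range (fun w : {w : FreeMonoid A // ¬ IsTip w ∧ w.toList.length = r} =>
          Submodule.Quotient.mk (p := Submodule.restrictScalars (ZMod p) (J ^ (r + 1)))
            (φ (wordMonomial (ZMod p) w.1)))) =
        Submodule.map
          (Submodule.mkQ (Submodule.restrictScalars (ZMod p) (J ^ (r + 1))))
          (Submodule.restrictScalars (ZMod p) (J ^ r))) := by
  classical
  haveI : Fact p.Prime := ⟨hp⟩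
  haveI : Finite (MonoidAlgebra (ZMod p) G) := by
    have h : Finite (G →₀ ZMod p) :=
      Finite.of_injective (fun f => (f : G → ZMod p)) (DFunLike.coe_injective)
    exact Finite.of_injective MonoidAlgebra.coeff MonoidAlgebra.coeff_injective
  set f : FreeMonoid A → MonoidAlgebra (ZMod p) G :=
    fun w => φ (wordMonomial (ZMod p) w) with hfdef
  -- basic multiplicativity facts
  have hfmul : ∀ u v, f (u * v) = f u * f v := by
    intro u v
    show φ (FreeMonoid.lift (FreeAlgebra.ι (ZMod p)) (u * v)) = _
    rw [map_mul, map_mul]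
    rfl
  have hf1 : f 1 = 1 := by
    show φ (FreeMonoid.lift (FreeAlgebra.ι (ZMod p)) 1) = 1
    rw [map_one, map_one]
  have hfof : ∀ a : A, f (FreeMonoid.of a) = φ (FreeAlgebra.ι (ZMod p) a) := by
    intro a
    show φ (FreeMonoid.lift (FreeAlgebra.ι (ZMod p)) (FreeMonoid.of a)) = _
    rw [FreeMonoid.lift_eval_of]
  have hfprod : ∀ w : FreeMonoid A,
      f w = (w.toList.map (⇑φ ∘ FreeAlgebra.ι (ZMod p))).prod := by
    intro w
    show φ (FreeMonoid.lift (FreeAlgebra.ι (ZMod p)) w) = _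
    rw [FreeMonoid.lift_apply, map_list_prod, List.map_map]
  -- powers of J
  have hpowsucc : ∀ n : ℕ, J ^ (n + 1) = J * J ^ n := by
    intro n; rw [hJ]; exact jac_pow_succ' n
  have hfJpow : ∀ w : FreeMonoid A, f w ∈ J ^ w.toList.length := by
    intro w
    rw [hfprod]
    generalize w.toList = l
    induction l with
    | nil =>
        simp only [List.map_nil, List.prod_nil, List.length_nil, Submodule.pow_zero,
          Ideal.one_eq_top]
        exact Submodule.mem_top
    | cons a l ih =>
        simp only [List.map_cons, List.prod_cons, List.length_cons]
        rw [hpowsucc]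
        exact Ideal.mul_mem_mul (hrad a) ih
  have hJne : J ≠ ⊤ := by
    intro htop
    rw [hJ, Ideal.jacobson_eq_top_iff] at htop
    have h1 : (1 : MonoidAlgebra (ZMod p) G) ∈ (⊥ : Ideal (MonoidAlgebra (ZMod p) G)) :=
      htop ▸ Submodule.mem_top
    exact one_ne_zero (Ideal.mem_bot.mp h1)
  -- spanning of the whole algebra by monomial images
  have htop : Submodule.span (ZMod p) (Set.range f) = ⊤ := by
    have hone : (1 : MonoidAlgebra (ZMod p) G) ∈ Submodule.span (ZMod p) (Set.range f) :=
      hf1 ▸ Submodule.subset_span ⟨1, rfl⟩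
    have hmulc : ∀ x y : MonoidAlgebra (ZMod p) G,
        x ∈ Submodule.span (ZMod p) (Set.range f) →
        y ∈ Submodule.span (ZMod p) (Set.range f) →
        x * y ∈ Submodule.span (ZMod p) (Set.range f) := by
      intro x y hx hy
      have hmul : Submodule.span (ZMod p) (Set.range f) * Submodule.span (ZMod p) (Set.range f)
          ≤ Submodule.span (ZMod p) (Set.range f) := by
        rw [Submodule.span_mul_span]
        apply Submodule.span_mono
        rintro _ ⟨_, ⟨u, rfl⟩, _, ⟨v, rfl⟩, rfl⟩
        exact ⟨u * v, hfmul u v⟩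
      exact hmul (Submodule.mul_mem_mul hx hy)
    have hφmem : ∀ x, φ x ∈ Submodule.span (ZMod p) (Set.range f) := by
      intro x
      refine FreeAlgebra.induction (ZMod p) A ?_ ?_ ?_ ?_ x
      · intro r
        rw [AlgHom.commutes, Algebra.algebraMap_eq_smul_one]
        exact Submodule.smul_mem _ r hone
      · intro a
        exact Submodule.subset_span ⟨FreeMonoid.of a, hfof a⟩
      · intro a b ha hb
        rw [map_mul]
        exact hmulc _ _ ha hb
      · intro a b ha hb
        rw [map_add]
        exact add_mem ha hb
    apply top_unique
    intro x _
    obtain ⟨y, rfl⟩ := hsurj x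
    exact hφmem y
  -- span of long words is contained in J^n
  have hle : ∀ n : ℕ, Submodule.span (ZMod p) (f '' {w | n ≤ w.toList.length})
      ≤ Submodule.restrictScalars (ZMod p) (J ^ n) := by
    intro n
    rw [Submodule.span_le]
    rintro _ ⟨w, hw, rfl⟩
    rw [SetLike.mem_coe, Submodule.restrictScalars_mem]
    exact Ideal.pow_le_pow_right hw (hfJpow w)
  -- J itself is spanned by words of length ≥ 1
  have hJ1 : Submodule.restrictScalars (ZMod p) J
      ≤ Submodule.span (ZMod p) (f '' {w | 1 ≤ w.toList.length}) := by
    have hsup : (⊤ : Submodule (ZMod p) (MonoidAlgebra (ZMod p) G))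
        ≤ Submodule.span (ZMod p) {(1 : MonoidAlgebra (ZMod p) G)}
          ⊔ Submodule.span (ZMod p) (f '' {w | 1 ≤ w.toList.length}) := by
      rw [← htop, Submodule.span_le]
      rintro _ ⟨w, rfl⟩
      by_cases hw : w.toList.length = 0
      · apply Submodule.mem_sup_left
        have hnil : w.toList = [] := List.length_eq_zero_iff.mp hw
        have : f w = 1 := by rw [hfprod, hnil]; simp
        rw [this]
        exact Submodule.subset_span rfl
      · exact Submodule.mem_sup_right (Submodule.subset_span ⟨w, by simp only [Set.mem_setOf_eq]; omega, rfl⟩)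
    intro x hx
    rw [Submodule.restrictScalars_mem] at hx
    obtain ⟨y, hy, z, hz, rfl⟩ := Submodule.mem_sup.mp (hsup (show x ∈ (⊤ : Submodule (ZMod p) (MonoidAlgebra (ZMod p) G)) from trivial))
    obtain ⟨c, rfl⟩ := Submodule.mem_span_singleton.mp hy
    by_cases hc : c = 0
    · subst hc
      simpa using hz
    · exfalso
      have hzJ : z ∈ Submodule.restrictScalars (ZMod p) J := by
        have h1 := hle 1 hz
        rwa [Submodule.pow_one] at h1
      have hcJ : c • (1 : MonoidAlgebra (ZMod p) G)
          ∈ Submodule.restrictScalars (ZMod p) J := by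
        have hsum : c • (1 : MonoidAlgebra (ZMod p) G) + z
            ∈ Submodule.restrictScalars (ZMod p) J := by
          rw [Submodule.restrictScalars_mem]; exact hx
        have := Submodule.sub_mem _ hsum hzJ
        simpa using this
      have h1J : (1 : MonoidAlgebra (ZMod p) G)
          ∈ Submodule.restrictScalars (ZMod p) J := by
        have := Submodule.smul_mem _ c⁻¹ hcJ
        rwa [smul_smul, inv_mul_cancel₀ hc, one_smul] at this
      exact hJne ((Ideal.eq_top_iff_one J).mpr
        (by rwa [Submodule.restrictScalars_mem] at h1J))
  -- J^n is spanned by words of length ≥ n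
  have hspan : ∀ n : ℕ, Submodule.span (ZMod p) (f '' {w | n ≤ w.toList.length})
      = Submodule.restrictScalars (ZMod p) (J ^ n) := by
    intro n
    refine le_antisymm (hle n) ?_
    induction n with
    | zero =>
        have huniv : {w : FreeMonoid A | 0 ≤ w.toList.length} = Set.univ := by
          ext w; simp
        rw [huniv, Set.image_univ, htop]
        exact le_top
    | succ n ih =>
        intro x hx
        rw [Submodule.restrictScalars_mem, hpowsucc n] at hx
        refine Submodule.smul_induction_on hx ?_ ?_
        · intro r hr m hm
          have hr' : r ∈ Submodule.span (ZMod p) (f '' {w | 1 ≤ w.toList.length}) :=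
            hJ1 (by rw [Submodule.restrictScalars_mem]; exact hr)
          have hm' : m ∈ Submodule.span (ZMod p) (f '' {w | n ≤ w.toList.length}) :=
            ih (by rw [Submodule.restrictScalars_mem]; exact hm)
          have hmul : Submodule.span (ZMod p) (f '' {w | 1 ≤ w.toList.length})
              * Submodule.span (ZMod p) (f '' {w | n ≤ w.toList.length})
              ≤ Submodule.span (ZMod p) (f '' {w | n + 1 ≤ w.toList.length}) := by
            rw [Submodule.span_mul_span]
            apply Submodule.span_mono
            rintro _ ⟨_, ⟨u, hu, rfl⟩, _, ⟨v, hv, rfl⟩, rfl⟩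
            refine ⟨u * v, ?_, hfmul u v⟩
            rw [Set.mem_setOf_eq, FreeMonoid.toList_mul, List.length_append]
            rw [Set.mem_setOf_eq] at hu hv
            omega
          have := hmul (Submodule.mul_mem_mul hr' hm')
          rwa [smul_eq_mul]
        · intro a b ha hb
          exact add_mem ha hb
  -- nilpotency of J
  obtain ⟨N, hN⟩ : ∃ N : ℕ, J ^ N = ⊥ := by
    rw [hJ]
    exact jac_nilpotent_of_finite
  have hfzero : ∀ w : FreeMonoid A, N ≤ w.toList.length → f w = 0 := by
    intro w hw
    have := Ideal.pow_le_pow_right hw (hfJpow w)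
    rw [hN] at this
    exact Ideal.mem_bot.mp this
  -- finiteness of the relevant sets of words
  have hfin : ∀ w : FreeMonoid A,
      Set.Finite {v : FreeMonoid A | RLLlt v w ∧ v.toList.length < N} := by
    intro w
    have h1 : Set.Finite {v : FreeMonoid A | v.toList.length < N} := by
      have := (List.finite_length_lt A N).preimage
        (Function.Injective.injOn (FreeMonoid.toList.injective))
      exact this
    exact h1.subset fun v hv => hv.2
  -- reduction to nontips
  have hred : ∀ w : FreeMonoid A, f w ∈ Submodule.span (ZMod p)
      (f '' {v | ¬ IsTip v ∧ w.toList.length ≤ v.toList.length}) := by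
    have main : ∀ n : ℕ, ∀ w : FreeMonoid A,
        ({v : FreeMonoid A | RLLlt v w ∧ v.toList.length < N}).ncard = n →
        f w ∈ Submodule.span (ZMod p)
          (f '' {v | ¬ IsTip v ∧ w.toList.length ≤ v.toList.length}) := by
      intro n
      induction n using Nat.strong_induction_on with
      | _ n ih =>
        intro w hw
        by_cases hlenN : N ≤ w.toList.length
        · rw [hfzero w hlenN]
          exact zero_mem _
        · push_neg at hlenN
          by_cases htipw : IsTip w
          · have h1 := (hTip w).mp htipw
            refine Submodule.span_le.mpr ?_ h1
            rintro _ ⟨v, hv, rfl⟩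
            rw [Set.mem_setOf_eq] at hv
            show f v ∈ _
            by_cases hvN : N ≤ v.toList.length
            · rw [hfzero v hvN]
              exact zero_mem _
            · push_neg at hvN
              have hvw : v ∈ {u : FreeMonoid A | RLLlt u w ∧ u.toList.length < N} :=
                ⟨hv, hvN⟩
              have hss : {u : FreeMonoid A | RLLlt u v ∧ u.toList.length < N}
                  ⊂ {u : FreeMonoid A | RLLlt u w ∧ u.toList.length < N} := by
                constructor
                · rintro u ⟨hu1, hu2⟩
                  exact ⟨RLLlt_trans hu1 hv, hu2⟩
                · intro hcontra
                  exact RLLlt_irrefl v (hcontra hvw).1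
              have hlt : ({u : FreeMonoid A | RLLlt u v ∧ u.toList.length < N}).ncard < n := by
                rw [← hw]
                exact Set.ncard_lt_ncard hss (hfin w)
              have hv' := ih _ hlt v rfl
              refine Submodule.span_le.mpr ?_ hv'
              apply Set.image_subset_iff.mpr
              intro u hu
              apply Submodule.subset_span
              refine ⟨u, ⟨hu.1, le_trans (RLLlt_length hv) hu.2⟩, rfl⟩
          · exact Submodule.subset_span ⟨w, ⟨htipw, le_refl _⟩, rfl⟩
    exact fun w => main _ w rfl
  -- the span of nontips of length ≥ r is J^r
  have hspanNT : ∀ r : ℕ, Submodule.span (ZMod p)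
      (f '' {w | ¬ IsTip w ∧ r ≤ w.toList.length})
      = Submodule.restrictScalars (ZMod p) (J ^ r) := by
    intro r
    apply le_antisymm
    · refine le_trans (Submodule.span_mono ?_) (hle r)
      exact Set.image_mono fun w hw => hw.2
    · rw [← hspan r, Submodule.span_le]
      rintro _ ⟨w, hw, rfl⟩
      rw [Set.mem_setOf_eq] at hw
      refine Submodule.span_le.mpr ?_ (hred w)
      apply Set.image_subset_iff.mpr
      intro u hu
      apply Submodule.subset_span
      exact ⟨u, ⟨hu.1, le_trans hw hu.2⟩, rfl⟩
  -- linear independence of all nontips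
  have hLI : LinearIndependent (ZMod p)
      (fun w : {w : FreeMonoid A // ¬ IsTip w} => f w.1) := by
    rw [linearIndependent_iff']
    intro s g hsum i hi
    by_contra hgi
    set t := s.filter (fun j => g j ≠ 0) with htdef
    have htne : t.Nonempty := ⟨i, Finset.mem_filter.mpr ⟨hi, hgi⟩⟩
    obtain ⟨w₀, hw₀, hmin⟩ := Finset.exists_min_image t (fun j => llKey j.1) htne
    have hg0 : g w₀ ≠ 0 := (Finset.mem_filter.mp hw₀).2
    have hsum' : ∑ j ∈ t, g j • f j.1 = 0 := by
      rw [← hsum, htdef]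
      apply Finset.sum_filter_of_ne
      intro x hx h hgx
      exact h (by rw [hgx, zero_smul])
    rw [← Finset.add_sum_erase t _ hw₀] at hsum'
    have h2 : g w₀ • f w₀.1 = -∑ j ∈ t.erase w₀, g j • f j.1 := by
      rw [eq_neg_iff_add_eq_zero]; exact hsum'
    have hw0eq : f w₀.1 = ∑ j ∈ t.erase w₀, (-(g w₀)⁻¹ * g j) • f j.1 := by
      calc f w₀.1 = (g w₀)⁻¹ • (g w₀ • f w₀.1) := by
            rw [smul_smul, inv_mul_cancel₀ hg0, one_smul]
        _ = (g w₀)⁻¹ • (-∑ j ∈ t.erase w₀, g j • f j.1) := by rw [h2]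
        _ = ∑ j ∈ t.erase w₀, (-(g w₀)⁻¹ * g j) • f j.1 := by
            rw [smul_neg, Finset.smul_sum, ← Finset.sum_neg_distrib]
            apply Finset.sum_congr rfl
            intro j hj
            rw [smul_smul, neg_mul, neg_smul]
    have htip0 : IsTip w₀.1 := by
      rw [hTip]
      show f w₀.1 ∈ _
      rw [hw0eq]
      apply Submodule.sum_mem
      intro j hj
      apply Submodule.smul_mem
      apply Submodule.subset_span
      refine ⟨j.1, ?_, rfl⟩
      rw [Set.mem_setOf_eq]
      have hne : j ≠ w₀ := Finset.ne_of_mem_erase hj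
      have hlekey := hmin j (Finset.mem_of_mem_erase hj)
      have hkeyne : llKey w₀.1 ≠ llKey j.1 := by
        intro hk
        exact hne (Subtype.ext (llKey_injective hk)).symm
      exact (LLlt_iff_key _ _).mpr (lt_of_le_of_ne hlekey hkeyne)
    exact w₀.2 htip0
  -- conclusion
  intro r
  refine ⟨⟨?_, ?_⟩, ?_, ?_⟩
  · -- (1) linear independence
    exact hLI.comp
      (fun w : {w : FreeMonoid A // ¬ IsTip w ∧ r ≤ w.toList.length} =>
        (⟨w.1, w.2.1⟩ : {w : FreeMonoid A // ¬ IsTip w}))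
      (by intro a b hab; have h2 := congrArg Subtype.val hab; exact Subtype.ext h2)
  · -- (1) spanning
    have hrange : Set.range (fun w : {w : FreeMonoid A // ¬ IsTip w ∧ r ≤ w.toList.length} =>
        φ (wordMonomial (ZMod p) w.1)) = f '' {w | ¬ IsTip w ∧ r ≤ w.toList.length} := by
      ext x
      constructor
      · rintro ⟨⟨w, hw⟩, rfl⟩
        exact ⟨w, hw, rfl⟩
      · rintro ⟨w, hw, rfl⟩
        exact ⟨⟨w, hw⟩, rfl⟩
    rw [hrange, hspanNT r]
  · -- (2) linear independence
    have hLI2 : LinearIndependent (ZMod p)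
        (fun w : {w : FreeMonoid A // ¬ IsTip w ∧ w.toList.length = r} => f w.1) :=
      hLI.comp
        (fun w : {w : FreeMonoid A // ¬ IsTip w ∧ w.toList.length = r} =>
          (⟨w.1, w.2.1⟩ : {w : FreeMonoid A // ¬ IsTip w}))
        (by intro a b hab; have h2 := congrArg Subtype.val hab; exact Subtype.ext h2)
    have him1 : (fun j : {w : FreeMonoid A // ¬ IsTip w} => f j.1)
        '' {j | j.1.toList.length = r} = f '' {w | ¬ IsTip w ∧ w.toList.length = r} := by
      ext x
      constructor
      · rintro ⟨⟨w, hw⟩, hlen, rfl⟩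
        exact ⟨w, ⟨hw, hlen⟩, rfl⟩
      · rintro ⟨w, ⟨hw, hlen⟩, rfl⟩
        exact ⟨⟨w, hw⟩, hlen, rfl⟩
    have him2 : (fun j : {w : FreeMonoid A // ¬ IsTip w} => f j.1)
        '' {j | r + 1 ≤ j.1.toList.length}
        = f '' {w | ¬ IsTip w ∧ r + 1 ≤ w.toList.length} := by
      ext x
      constructor
      · rintro ⟨⟨w, hw⟩, hlen, rfl⟩
        exact ⟨w, ⟨hw, hlen⟩, rfl⟩
      · rintro ⟨w, ⟨hw, hlen⟩, rfl⟩
        exact ⟨⟨w, hw⟩, hlen, rfl⟩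
    have hrange2 : Set.range
        (fun w : {w : FreeMonoid A // ¬ IsTip w ∧ w.toList.length = r} => f w.1)
        = f '' {w | ¬ IsTip w ∧ w.toList.length = r} := by
      ext x
      constructor
      · rintro ⟨⟨w, hw⟩, rfl⟩
        exact ⟨w, hw, rfl⟩
      · rintro ⟨w, hw, rfl⟩
        exact ⟨⟨w, hw⟩, rfl⟩
    have hdisj : Disjoint
        (Submodule.span (ZMod p) (Set.range
          (fun w : {w : FreeMonoid A // ¬ IsTip w ∧ w.toList.length = r} => f w.1)))
        (LinearMap.ker (Submodule.mkQ (Submodule.restrictScalars (ZMod p) (J ^ (r + 1))))) := by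
      rw [Submodule.ker_mkQ, hrange2, ← hspanNT (r + 1), ← him1, ← him2]
      exact hLI.disjoint_span_image (Set.disjoint_left.mpr (by
        intro j hj1 hj2
        rw [Set.mem_setOf_eq] at hj1 hj2
        omega))
    exact hLI2.map hdisj
  · -- (2) spanning
    have hrq : Set.range (fun w : {w : FreeMonoid A // ¬ IsTip w ∧ w.toList.length = r} =>
        Submodule.Quotient.mk (p := Submodule.restrictScalars (ZMod p) (J ^ (r + 1)))
          (φ (wordMonomial (ZMod p) w.1)))
        = (Submodule.mkQ (Submodule.restrictScalars (ZMod p) (J ^ (r + 1))))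
          '' (f '' {w | ¬ IsTip w ∧ w.toList.length = r}) := by
      ext x
      constructor
      · rintro ⟨⟨w, hw⟩, rfl⟩
        exact ⟨f w, ⟨w, hw, rfl⟩, rfl⟩
      · rintro ⟨_, ⟨w, hw, rfl⟩, rfl⟩
        exact ⟨⟨w, hw⟩, rfl⟩
    rw [hrq, ← hspanNT r, Submodule.map_span]
    apply le_antisymm
    · apply Submodule.span_mono
      apply Set.image_mono
      apply Set.image_mono
      rintro w ⟨hw1, hw2⟩
      exact ⟨hw1, hw2.ge⟩
    · rw [Submodule.span_le]
      rintro _ ⟨_, ⟨w, ⟨hnt, hlen⟩, rfl⟩, rfl⟩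
      rcases eq_or_lt_of_le hlen with heq | hlt
      · exact Submodule.subset_span ⟨f w, ⟨w, ⟨hnt, heq.symm⟩, rfl⟩, rfl⟩
      · have h0 : (Submodule.mkQ (Submodule.restrictScalars (ZMod p) (J ^ (r + 1)))) (f w)
            = 0 := by
          rw [Submodule.mkQ_apply, Submodule.Quotient.mk_eq_zero,
            Submodule.restrictScalars_mem]
          exact Ideal.pow_le_pow_right hlt (hfJpow w)
        rw [SetLike.mem_coe, h0]
        exact zero_mem _
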